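/- Define a strict order on elements of the n-th iterated power set of {{0},{1}} by: {0} < {1} at level 0, and at level r+1, A < B iff there exists an element c of level r with c ∈ B \ A such that for all level-r elements c* with c < c*, c* ∈ A ↔ c* ∈ B. Then < is a strict total order at every level, and is isomorphic to the order on natural numbers 0,…,twr(n)−1 under binary representation, where twr(0)=2 and twr(r+1)=2^twr(r). In particular, level n has exactly twr(n) elements. -/

import Mathlib

/-- `twr 0 = 2`, `twr (r+1) = 2 ^ twr r`. -/
def twr : ℕ → ℕ
  | 0 => 2
  | r + 1 => 2 ^ twr r

/-- The `r`-th iterated power set of the two-element set `{{0},{1}}`: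
`It 0` is the two-element type (`false` for `{0}`, `true` for `{1}`) and
`It (r+1) = powerset (It r)`. -/
def It : ℕ → Type
  | 0 => Bool
  | r + 1 => Set (It r)

/-- Membership between consecutive levels (`It (r+1)` is `Set (It r)`). -/
def itMem {r : ℕ} (c : It r) (A : It (r + 1)) : Prop := A c

instance {r : ℕ} : Membership (It r) (It (r + 1)) := ⟨fun A c => itMem c A⟩

/-- The recursively defined strict order: `{0} < {1}` at level `0`, and at level
`r+1`, `A < B` iff some level-`r` element `c ∈ B \ A` is such that all `c* > c`
agree between `A` and `B`. -/
def ltIt : (r : ℕ) → It r → It r → Prop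
  | 0, a, b => a = false ∧ b = true
  | r + 1, A, B => ∃ c : It r, c ∈ B ∧ c ∉ A ∧
      ∀ c' : It r, ltIt r c c' → (c' ∈ A ↔ c' ∈ B)



/-- Binary value of a bit vector, least significant bit first. -/
def nfAux : {m : ℕ} → (Fin m → Bool) → ℕ
  | 0, _ => 0
  | _ + 1, f => (f 0).toNat + 2 * nfAux (fun i => f i.succ)

lemma nfAux_lt {m : ℕ} (f : Fin m → Bool) : nfAux f < 2 ^ m := by
  induction m with
  | zero => simp [nfAux]
  | succ m ih =>
    have h := ih (fun i => f i.succ)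
    have hb : (f 0).toNat ≤ 1 := Bool.toNat_le _
    simp only [nfAux, pow_succ]
    omega

lemma testBit_nfAux {m : ℕ} (f : Fin m → Bool) (k : ℕ) :
    (nfAux f).testBit k = if h : k < m then f ⟨k, h⟩ else false := by
  induction m generalizing k with
  | zero => simp [nfAux]
  | succ m ih =>
    cases k with
    | zero =>
      have hb : (f 0).toNat ≤ 1 := Bool.toNat_le _
      simp only [nfAux, Nat.testBit_zero, Nat.zero_lt_succ, dif_pos]
      cases h : f 0 <;> simp [h] at hb ⊢
    | succ k =>
      have hb : (f 0).toNat ≤ 1 := Bool.toNat_le _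
      have hdiv : ((f 0).toNat + 2 * nfAux (fun i => f i.succ)) / 2
          = nfAux (fun i => f i.succ) := by omega
      rw [show nfAux f = (f 0).toNat + 2 * nfAux (fun i => f i.succ) from rfl,
        Nat.testBit_succ, hdiv, ih]
      by_cases h : k < m
      · rw [dif_pos h, dif_pos (Nat.succ_lt_succ h)]
        rfl
      · rw [dif_neg h, dif_neg (fun hh => h (Nat.lt_of_succ_lt_succ hh))]

lemma nfAux_testBit {m : ℕ} (k : ℕ) (hk : k < 2 ^ m) :
    nfAux (fun i : Fin m => k.testBit i) = k := by
  apply Nat.eq_of_testBit_eq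
  intro j
  rw [testBit_nfAux]
  split
  · rfl
  · exact (Nat.testBit_lt_two_pow (lt_of_lt_of_le hk
      (Nat.pow_le_pow_right two_pos (le_of_not_gt ‹_›)))).symm

lemma nfAux_lt_iff {m : ℕ} (f g : Fin m → Bool) :
    nfAux f < nfAux g ↔
      ∃ i : Fin m, g i = true ∧ f i = false ∧ ∀ j : Fin m, i < j → f j = g j := by
  constructor
  · intro h
    have hne : nfAux f ^^^ nfAux g ≠ 0 := fun h0 => Nat.ne_of_lt h (by have := congrArg (· ^^^ nfAux g) h0; simpa [Nat.xor_assoc] using this)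
    obtain ⟨i, hi, hi'⟩ := Nat.exists_most_significant_bit hne
    have hxlt : nfAux f ^^^ nfAux g < 2 ^ m :=
      Nat.xor_lt_two_pow (nfAux_lt f) (nfAux_lt g)
    have him : i < m := by
      by_contra hm
      rw [Nat.testBit_lt_two_pow (lt_of_lt_of_le hxlt
        (Nat.pow_le_pow_right two_pos (le_of_not_gt hm)))] at hi
      exact Bool.false_ne_true hi
    have hne' : f ⟨i, him⟩ ≠ g ⟨i, him⟩ := by
      intro hfg
      rw [Nat.testBit_xor, testBit_nfAux, testBit_nfAux, dif_pos him, dif_pos him, hfg] at hi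
      simp at hi
    have hagree : ∀ j : Fin m, (⟨i, him⟩ : Fin m) < j → f j = g j := by
      intro j hj
      have := hi' j hj
      rw [Nat.testBit_xor, testBit_nfAux, testBit_nfAux, dif_pos j.isLt, dif_pos j.isLt] at this
      simpa [Fin.eta] using this
    cases hg : g ⟨i, him⟩ with
    | true =>
      refine ⟨⟨i, him⟩, hg, ?_, hagree⟩
      cases hf : f ⟨i, him⟩
      · rfl
      · exact absurd (hf.trans hg.symm) hne'
    | false =>
      exfalso
      have hf : f ⟨i, him⟩ = true := by
        cases hf : f ⟨i, him⟩
        · exact absurd (hf.trans hg.symm) hne'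
        · rfl
      have : nfAux g < nfAux f := by
        apply Nat.lt_of_testBit i
        · rw [testBit_nfAux, dif_pos him]; exact hg
        · rw [testBit_nfAux, dif_pos him]; exact hf
        · intro j hj
          rw [testBit_nfAux, testBit_nfAux]
          by_cases hjm : j < m
          · rw [dif_pos hjm, dif_pos hjm, hagree ⟨j, hjm⟩ hj]
          · rw [dif_neg hjm, dif_neg hjm]
      omega
  · rintro ⟨i, hgi, hfi, hagree⟩
    apply Nat.lt_of_testBit (i : ℕ)
    · rw [testBit_nfAux, dif_pos i.isLt, Fin.eta]; exact hfi
    · rw [testBit_nfAux, dif_pos i.isLt, Fin.eta]; exact hgi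
    · intro j hj
      rw [testBit_nfAux, testBit_nfAux]
      by_cases hjm : j < m
      · rw [dif_pos hjm, dif_pos hjm]
        exact hagree ⟨j, hjm⟩ hj
      · rw [dif_neg hjm, dif_neg hjm]

lemma itMem_iff {r : ℕ} (c : It r) (A : It (r + 1)) : c ∈ A ↔ itMem c A := Iff.rfl

lemma key (n : ℕ) : ∃ e : It n ≃ Fin (twr n), ∀ a b : It n, ltIt n a b ↔ e a < e b := by
  induction n with
  | zero =>
    refine ⟨(finTwoEquiv.symm : Bool ≃ Fin 2), fun a b => ?_⟩
    show (a = false ∧ b = true) ↔ _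
    revert a b
    show ∀ a b : Bool, _
    exact (by decide : ∀ a b : Bool, (a = false ∧ b = true) ↔ finTwoEquiv.symm a < finTwoEquiv.symm b)
  | succ r ih =>
    classical
    obtain ⟨e, he⟩ := ih
    let F : It (r + 1) → (Fin (twr r) → Bool) := fun A i => decide (itMem (e.symm i) A)
    have hF : ∀ (A : It (r + 1)) (c : It r), F A (e c) = decide (itMem c A) := by
      intro A c
      simp only [F, Equiv.symm_apply_apply]
    refine ⟨⟨fun A => ⟨nfAux (F A), nfAux_lt _⟩,
        fun k => (fun c => (k : ℕ).testBit (e c) = true : Set (It r)), ?_, ?_⟩, ?_⟩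
    · intro A
      funext c
      show ((nfAux (F A)).testBit (e c) = true) = A c
      rw [testBit_nfAux, dif_pos (e c).isLt, Fin.eta, hF]
      simp [itMem]
      exact decide_eq_true_iff
    · intro k
      apply Fin.ext
      show nfAux (F _) = (k : ℕ)
      have : F (fun c => (k : ℕ).testBit (e c) = true : Set (It r))
          = fun i : Fin (twr r) => (k : ℕ).testBit i := by
        funext i
        simp only [F, itMem, Equiv.apply_symm_apply]
        simp
      rw [this]
      exact nfAux_testBit _ k.isLt
    · intro A B
      show (∃ c : It r, c ∈ B ∧ c ∉ A ∧ ∀ c' : It r, ltIt r c c' → (c' ∈ A ↔ c' ∈ B)) ↔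
        nfAux (F A) < nfAux (F B)
      rw [nfAux_lt_iff]
      constructor
      · rintro ⟨c, hcB, hcA, hagree⟩
        refine ⟨e c, ?_, ?_, ?_⟩
        · rw [hF]; exact decide_eq_true hcB
        · rw [hF]; exact decide_eq_false hcA
        · intro j hj
          have h' : ltIt r c (e.symm j) := by
            rw [he]
            simpa using hj
          have := hagree _ h'
          simp only [F]
          simp [itMem_iff, itMem] at this ⊢
          exact Bool.decide_congr this
      · rintro ⟨i, hgi, hfi, hagree⟩
        refine ⟨e.symm i, ?_, ?_, ?_⟩
        · have := hgi; simp only [F, decide_eq_true_eq] at this; exact this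
        · have := hfi; simp only [F, decide_eq_false_iff_not] at this; exact this
        · intro c' hc'
          have hj : i < e c' := by
            rw [he] at hc'
            simpa using hc'
          have := hagree (e c') hj
          rw [hF, hF] at this
          constructor <;> intro h
          · have : decide (itMem c' A) = decide (itMem c' B) := this
            simp only [itMem_iff]
            rw [← decide_eq_true_eq (p := itMem c' B), ← this, decide_eq_true_eq]
            exact h
          · simp only [itMem_iff]
            rw [← decide_eq_true_eq (p := itMem c' A), this, decide_eq_true_eq]
            exact h

theorem ltIt_strict_total_order_iso (n : ℕ) :
    (∀ a : It n, ¬ ltIt n a a) ∧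
    (∀ a b c : It n, ltIt n a b → ltIt n b c → ltIt n a c) ∧
    (∀ a b : It n, a ≠ b → ltIt n a b ∨ ltIt n b a) ∧
    ∃ e : It n ≃ Fin (twr n), ∀ a b : It n, ltIt n a b ↔ e a < e b := by
  obtain ⟨e, he⟩ := key n
  refine ⟨fun a h => ?_, fun a b c hab hbc => ?_, fun a b hab => ?_, e, he⟩
  · exact lt_irrefl _ ((he a a).1 h)
  · exact (he a c).2 (lt_trans ((he a b).1 hab) ((he b c).1 hbc))
  · rcases lt_or_gt_of_ne (fun h : e a = e b => hab (e.injective h)) with h | h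
    · exact Or.inl ((he a b).2 h)
    · exact Or.inr ((he b a).2 h)
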